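/- (FKG inequality for h.) Let D be a finite subset of ℤ², B ⊆ D, and let (B,κ) be an admissible boundary condition such that κ_v is a (possibly unbounded) integer interval for every v ∈ B. Then for any two increasing functions F, G : ℤ^D → ℝ, φ_D^{B,κ}[F(h)G(h)] ≥ φ_D^{B,κ}[F(h)] · φ_D^{B,κ}[G(h)]. -/

import Mathlib

open scoped BigOperators

namespace SquareIce

/-- Vertices of the square lattice `ℤ²`. -/
abbrev V : Type := ℤ × ℤ

/-- Nearest-neighbour adjacency: Euclidean distance 1. -/
def adj (u v : V) : Prop := (u.1 - v.1).natAbs + (u.2 - v.2).natAbs = 1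

/-- Diagonal (`×`) adjacency: Euclidean distance `√2`. -/
def xadj (u v : V) : Prop := (u.1 - v.1).natAbs = 1 ∧ (u.2 - v.2).natAbs = 1

/-- `*`-adjacency: graph distance exactly 2 in `ℤ²`. -/
def starAdj (u v : V) : Prop := (u.1 - v.1).natAbs + (u.2 - v.2).natAbs = 2

/-- A vertex is even when the sum of its coordinates is even. -/
def IsEvenV (v : V) : Prop := Even (v.1 + v.2)

/-- Squared Euclidean distance between two vertices. -/
def distSq (u v : V) : ℤ := (u.1 - v.1) ^ 2 + (u.2 - v.2) ^ 2

/-- Sup-norm of a vertex. -/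
def infNorm (v : V) : ℤ := max |v.1| |v.2|

/-- `h` is a height function on `D` (normalised to vanish outside `D`):
increments of absolute value one along edges of `D`, and even values on even
vertices (equivalently, `h v` has the parity of `v.1 + v.2`). -/
def IsHeightFn (D : Set V) (h : V → ℤ) : Prop :=
  (∀ u v, u ∈ D → v ∈ D → adj u v → |h u - h v| = 1) ∧
  (∀ v ∈ D, Even (h v + v.1 + v.2)) ∧ (∀ v, v ∉ D → h v = 0)

/-- Boundary of `D`: vertices of `D` with a nearest neighbour outside `D`. -/
def bdry (D : Set V) : Set V := {v | v ∈ D ∧ ∃ u, u ∉ D ∧ adj u v}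

/-- `A` and `B` are joined by a `rel`-path all of whose vertices lie in `S`. -/
def Connected (rel : V → V → Prop) (S A B : Set V) : Prop :=
  ∃ p : List V, ∃ hp : p ≠ [], List.Chain' rel p ∧ (∀ v ∈ p, v ∈ S) ∧
    p.head hp ∈ A ∧ p.getLast hp ∈ B

/-- `S` is the vertex set of a closed `×`-path. -/
def IsXCircuit (S : Set V) : Prop :=
  ∃ p : List V, ∃ hp : p ≠ [], List.Chain' xadj p ∧ p.head hp = p.getLast hp ∧
    {v | v ∈ p} = S

/-- A domain: a finite set whose boundary is a `×`-circuit. -/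
def IsDomain (D : Set V) : Prop := D.Finite ∧ IsXCircuit (bdry D)

/-- An even domain: a domain whose boundary consists of even vertices. -/
def IsEvenDomain (D : Set V) : Prop := IsDomain D ∧ ∀ v ∈ bdry D, IsEvenV v

/-- Height functions on `D` whose value at every `v ∈ B` lies in `κ v`. -/
def HomSet (D B : Set V) (κ : V → Set ℤ) : Set (V → ℤ) :=
  {h | IsHeightFn D h ∧ ∀ v ∈ B, h v ∈ κ v}

/-- Height functions on `D` with prescribed boundary values `κ` on `∂D`. -/
def HomBC (D : Set V) (κ : V → ℤ) : Set (V → ℤ) :=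
  {h | IsHeightFn D h ∧ ∀ v ∈ bdry D, h v = κ v}

/-- Height functions on `D` vanishing on `∂D`. -/
def Hom0 (D : Set V) : Set (V → ℤ) := HomBC D (fun _ => 0)

/-- Probability of `A` under the uniform measure on the finite set `S`. -/
noncomputable def pr {α : Type*} (S A : Set α) : ℝ :=
  (Nat.card (S ∩ A : Set α) : ℝ) / (Nat.card S : ℝ)

/-- Expectation of `f` under the uniform measure on the finite set `S`. -/
noncomputable def expec {α : Type*} (S : Set α) (f : α → ℝ) : ℝ :=
  (∑ᶠ x ∈ S, f x) / (Nat.card S : ℝ)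

/-- The box `Λ_{a,b} = ([-a,a] × [-b,b]) ∩ ℤ²`. -/
def Lam2 (a b : ℤ) : Set V := {v | |v.1| ≤ a ∧ |v.2| ≤ b}

/-- The box `Λ_a`. -/
def Lam (a : ℤ) : Set V := Lam2 a a

def leftSide (a b : ℤ) : Set V := {v | v.1 = -a ∧ |v.2| ≤ b}
def rightSide (a b : ℤ) : Set V := {v | v.1 = a ∧ |v.2| ≤ b}
def topSide (a b : ℤ) : Set V := {v | |v.1| ≤ a ∧ v.2 = b}
def botSide (a b : ℤ) : Set V := {v | |v.1| ≤ a ∧ v.2 = -b}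

/-- Horizontal crossing of `Λ_{a,b}` by a `rel`-path of vertices satisfying `P`. -/
def HCross (rel : V → V → Prop) (a b : ℤ) (P : V → Prop) : Prop :=
  Connected rel {v | v ∈ Lam2 a b ∧ P v} (leftSide a b) (rightSide a b)

/-- Vertical crossing of `Λ_{a,b}` by a `rel`-path of vertices satisfying `P`. -/
def VCross (rel : V → V → Prop) (a b : ℤ) (P : V → Prop) : Prop :=
  Connected rel {v | v ∈ Lam2 a b ∧ P v} (topSide a b) (botSide a b)

/-- `F` is increasing with respect to the pointwise order on `D`. -/
def IncreasingOn (D : Set V) (F : (V → ℤ) → ℝ) : Prop :=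
  ∀ h h' : V → ℤ, (∀ v ∈ D, h v ≤ h' v) → F h ≤ F h'

/-- The even box `Λ_m^even`: everything inside or on the even `×`-circuit
surrounding the origin contained in `Λ_{m+1} ∖ Λ_{m-1}`. -/
def LamEven (m : ℤ) : Set V := Lam m ∪ {v | infNorm v = m + 1 ∧ IsEvenV v}

/-- A quad: a domain `D` together with an enumeration `p` of its boundary
`×`-circuit (closed: first vertex repeated at the end) and marked points
`a = p[0]`, `b = p[ib]`, `c = p[ic]`, `d = p[idx]` in cyclic order. -/
structure Quad where
  D : Set V
  p : List V
  hp : p ≠ []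
  hchain : List.Chain' xadj p
  hclosed : p.head hp = p.getLast hp
  hbd : {v | v ∈ p} = bdry D
  hfin : D.Finite
  ib : ℕ
  ic : ℕ
  idx : ℕ
  h0b : 0 < ib
  hbc : ib < ic
  hcd : ic < idx
  hdlen : idx + 1 < p.length

namespace Quad

def ptA (q : Quad) : V := q.p.head q.hp
def ptB (q : Quad) : V := q.p.getD q.ib ((0 : ℤ), (0 : ℤ))
def ptC (q : Quad) : V := q.p.getD q.ic ((0 : ℤ), (0 : ℤ))
def ptD (q : Quad) : V := q.p.getD q.idx ((0 : ℤ), (0 : ℤ))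

/-- The (closed) arc `[ab]` of the boundary of a quad. -/
def arcAB (q : Quad) : Set V := {v | v ∈ q.p.take (q.ib + 1)}

/-- The (closed) arc `[bc]` of the boundary of a quad. -/
def arcBC (q : Quad) : Set V := {v | v ∈ (q.p.drop q.ib).take (q.ic - q.ib + 1)}

/-- The (closed) arc `[cd]` of the boundary of a quad. -/
def arcCD (q : Quad) : Set V := {v | v ∈ (q.p.drop q.ic).take (q.idx - q.ic + 1)}

/-- The (closed) arc `[da]` of the boundary of a quad. -/
def arcDA (q : Quad) : Set V := {v | v ∈ q.p.drop q.idx}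

/-- The open arc `(bc)` (excluding the endpoints `b` and `c`). -/
def openBC (q : Quad) : Set V :=
  {v | v ∈ (((q.p.drop q.ib).take (q.ic - q.ib + 1)).drop 1).dropLast}

/-- The open arc `(da)` (excluding the endpoints `d` and `a`). -/
def openDA (q : Quad) : Set V := {v | v ∈ ((q.p.drop q.idx).drop 1).dropLast}

end Quad


open scoped FinsetFamily

private lemma sup_step (a b c d s : ℤ) (h1 : |a - c| = 1) (h2 : |b - d| = 1)
    (e1 : Even (a + s)) (e2 : Even (b + s)) : |a ⊔ b - (c ⊔ d)| = 1 := by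
  obtain ⟨k, hk⟩ := e1; obtain ⟨l, hl⟩ := e2
  rw [Int.abs_eq_natAbs] at h1 h2 ⊢
  omega

private lemma inf_step (a b c d s : ℤ) (h1 : |a - c| = 1) (h2 : |b - d| = 1)
    (e1 : Even (a + s)) (e2 : Even (b + s)) : |a ⊓ b - (c ⊓ d)| = 1 := by
  obtain ⟨k, hk⟩ := e1; obtain ⟨l, hl⟩ := e2
  rw [Int.abs_eq_natAbs] at h1 h2 ⊢
  omega

private lemma homSet_sup_mem {D B : Set V} {κ : V → Set ℤ} {h h' : V → ℤ}
    (hh : h ∈ HomSet D B κ) (hh' : h' ∈ HomSet D B κ) : h ⊔ h' ∈ HomSet D B κ := by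
  obtain ⟨⟨he, hp, hz⟩, hκ⟩ := hh
  obtain ⟨⟨he', hp', hz'⟩, hκ'⟩ := hh'
  refine ⟨⟨fun u v hu hv ha => ?_, fun v hv => ?_, fun v hv => ?_⟩, fun v hv => ?_⟩
  · have e1 : Even (h u + (u.1 + u.2)) := by have := hp u hu; rwa [add_assoc] at this
    have e2 : Even (h' u + (u.1 + u.2)) := by have := hp' u hu; rwa [add_assoc] at this
    exact sup_step _ _ _ _ _ (he u v hu hv ha) (he' u v hu hv ha) e1 e2
  · simp only [Pi.sup_apply]
    rcases max_choice (h v) (h' v) with e | e <;> rw [e]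
    exacts [hp v hv, hp' v hv]
  · simp only [Pi.sup_apply, hz v hv, hz' v hv, sup_idem]
  · simp only [Pi.sup_apply]
    rcases max_choice (h v) (h' v) with e | e <;> rw [e]
    exacts [hκ v hv, hκ' v hv]

private lemma homSet_inf_mem {D B : Set V} {κ : V → Set ℤ} {h h' : V → ℤ}
    (hh : h ∈ HomSet D B κ) (hh' : h' ∈ HomSet D B κ) : h ⊓ h' ∈ HomSet D B κ := by
  obtain ⟨⟨he, hp, hz⟩, hκ⟩ := hh
  obtain ⟨⟨he', hp', hz'⟩, hκ'⟩ := hh'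
  refine ⟨⟨fun u v hu hv ha => ?_, fun v hv => ?_, fun v hv => ?_⟩, fun v hv => ?_⟩
  · have e1 : Even (h u + (u.1 + u.2)) := by have := hp u hu; rwa [add_assoc] at this
    have e2 : Even (h' u + (u.1 + u.2)) := by have := hp' u hu; rwa [add_assoc] at this
    exact inf_step _ _ _ _ _ (he u v hu hv ha) (he' u v hu hv ha) e1 e2
  · simp only [Pi.inf_apply]
    rcases min_choice (h v) (h' v) with e | e <;> rw [e]
    exacts [hp v hv, hp' v hv]
  · simp only [Pi.inf_apply, hz v hv, hz' v hv, inf_idem]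
  · simp only [Pi.inf_apply]
    rcases min_choice (h v) (h' v) with e | e <;> rw [e]
    exacts [hκ v hv, hκ' v hv]

private 
lemma fkg_finset {α : Type*} [DistribLattice α] [DecidableEq α] (S : Finset α)
    (hSne : S.Nonempty)
    (hsup : ∀ a ∈ S, ∀ b ∈ S, a ⊔ b ∈ S) (hinf : ∀ a ∈ S, ∀ b ∈ S, a ⊓ b ∈ S)
    (F G : α → ℝ) (hF : ∀ a ∈ S, ∀ b ∈ S, a ≤ b → F a ≤ F b)
    (hG : ∀ a ∈ S, ∀ b ∈ S, a ≤ b → G a ≤ G b) :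
    (∑ a ∈ S, F a) * (∑ a ∈ S, G a) ≤ (S.card : ℝ) * ∑ a ∈ S, F a * G a := by
  classical
  set cF := S.sup' hSne (fun h => -F h) with hcFdef
  set cG := S.sup' hSne (fun h => -G h) with hcGdef
  have hcF : ∀ h ∈ S, 0 ≤ F h + cF := fun h hh => by
    have := Finset.le_sup' (fun h => -F h) hh
    simp only [← hcFdef] at this; linarith
  have hcG : ∀ h ∈ S, 0 ≤ G h + cG := fun h hh => by
    have := Finset.le_sup' (fun h => -G h) hh
    simp only [← hcGdef] at this; linarith
  set f₁ : α → ℝ := fun h => if h ∈ S then F h + cF else 0 with hf₁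
  set f₂ : α → ℝ := fun h => if h ∈ S then G h + cG else 0 with hf₂
  set f₃ : α → ℝ := fun h => if h ∈ S then (1:ℝ) else 0 with hf₃
  set f₄ : α → ℝ := fun h => if h ∈ S then (F h + cF) * (G h + cG) else 0 with hf₄
  have h₁ : 0 ≤ f₁ := fun h => by dsimp [f₁]; split_ifs with hh; exacts [hcF h hh, le_rfl]
  have h₂ : 0 ≤ f₂ := fun h => by dsimp [f₂]; split_ifs with hh; exacts [hcG h hh, le_rfl]
  have h₃ : 0 ≤ f₃ := fun h => by dsimp [f₃]; split_ifs; exacts [zero_le_one, le_rfl]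
  have h₄ : 0 ≤ f₄ := fun h => by
    dsimp [f₄]; split_ifs with hh
    exacts [mul_nonneg (hcF h hh) (hcG h hh), le_rfl]
  have key := four_functions_theorem f₁ f₂ f₃ f₄ h₁ h₂ h₃ h₄ ?_ S S
  · -- process key
    have e1 : ∑ a ∈ S, f₁ a = ∑ a ∈ S, (F a + cF) :=
      Finset.sum_congr rfl fun x hx => if_pos hx
    have e2 : ∑ a ∈ S, f₂ a = ∑ a ∈ S, (G a + cG) :=
      Finset.sum_congr rfl fun x hx => if_pos hx
    have hsub3 : S ⊼ S ⊆ S := by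
      intro x hx
      rw [Finset.mem_infs] at hx
      obtain ⟨a, ha, b, hb, rfl⟩ := hx
      exact hinf a ha b hb
    have hsub4 : S ⊻ S ⊆ S := by
      intro x hx
      rw [Finset.mem_sups] at hx
      obtain ⟨a, ha, b, hb, rfl⟩ := hx
      exact hsup a ha b hb
    have e3 : ∑ a ∈ S ⊼ S, f₃ a ≤ (S.card : ℝ) := by
      calc ∑ a ∈ S ⊼ S, f₃ a ≤ ∑ a ∈ S, f₃ a :=
            Finset.sum_le_sum_of_subset_of_nonneg hsub3 (fun i _ _ => h₃ i)
        _ = (S.card : ℝ) := by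
            rw [Finset.sum_congr rfl fun x hx => if_pos hx]; simp
    have e4 : ∑ a ∈ S ⊻ S, f₄ a ≤ ∑ a ∈ S, (F a + cF) * (G a + cG) := by
      calc ∑ a ∈ S ⊻ S, f₄ a ≤ ∑ a ∈ S, f₄ a :=
            Finset.sum_le_sum_of_subset_of_nonneg hsub4 (fun i _ _ => h₄ i)
        _ = _ := Finset.sum_congr rfl fun x hx => if_pos hx
    have key2 : (∑ a ∈ S, (F a + cF)) * (∑ a ∈ S, (G a + cG)) ≤
        (S.card : ℝ) * ∑ a ∈ S, (F a + cF) * (G a + cG) := by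
      rw [← e1, ← e2]
      refine key.trans (mul_le_mul e3 e4 (Finset.sum_nonneg fun i _ => h₄ i) ?_)
      positivity
    -- expand
    have exp1 : ∑ a ∈ S, (F a + cF) = (∑ a ∈ S, F a) + (S.card : ℝ) * cF := by
      rw [Finset.sum_add_distrib, Finset.sum_const, nsmul_eq_mul]
    have exp2 : ∑ a ∈ S, (G a + cG) = (∑ a ∈ S, G a) + (S.card : ℝ) * cG := by
      rw [Finset.sum_add_distrib, Finset.sum_const, nsmul_eq_mul]
    have exp3 : ∑ a ∈ S, (F a + cF) * (G a + cG) =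
        (∑ a ∈ S, F a * G a) + cG * (∑ a ∈ S, F a) + cF * (∑ a ∈ S, G a)
          + (S.card : ℝ) * (cF * cG) := by
      have : ∀ a, (F a + cF) * (G a + cG)
          = F a * G a + cG * F a + cF * G a + cF * cG := fun a => by ring
      simp_rw [this]
      rw [Finset.sum_add_distrib, Finset.sum_add_distrib, Finset.sum_add_distrib,
        Finset.sum_const, nsmul_eq_mul, ← Finset.mul_sum, ← Finset.mul_sum]
    rw [exp1, exp2, exp3] at key2
    nlinarith [key2]
  · intro a b
    dsimp only [f₁, f₂, f₃, f₄]
    by_cases ha : a ∈ S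
    · by_cases hb : b ∈ S
      · rw [if_pos ha, if_pos hb, if_pos (hinf a ha b hb), if_pos (hsup a ha b hb), one_mul]
        exact mul_le_mul
          (by have := hF a ha _ (hsup a ha b hb) le_sup_left; linarith)
          (by have := hG b hb _ (hsup a ha b hb) le_sup_right; linarith)
          (hcG b hb)
          (hcF _ (hsup a ha b hb))
      · rw [if_neg hb, mul_zero]
        exact mul_nonneg (h₃ _) (h₄ _)
    · rw [if_neg ha, zero_mul]
      exact mul_nonneg (h₃ _) (h₄ _)


/-- The FKG inequality for `h`. -/
theorem fkg_h (D : Set V) (hD : D.Finite) (B : Set V) (hB : B ⊆ D)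
    (κ : V → Set ℤ) (hint : ∀ v ∈ B, (κ v).OrdConnected)
    (hne : (HomSet D B κ).Nonempty) (hfin : (HomSet D B κ).Finite)
    (F G : (V → ℤ) → ℝ) (hF : IncreasingOn D F) (hG : IncreasingOn D G) :
    expec (HomSet D B κ) F * expec (HomSet D B κ) G ≤
      expec (HomSet D B κ) (fun h => F h * G h) := by
  classical
  have hmem : ∀ h : V → ℤ, h ∈ hfin.toFinset ↔ h ∈ HomSet D B κ := fun h => hfin.mem_toFinset
  set S : Finset (V → ℤ) := hfin.toFinset with hSdef
  have hSne : S.Nonempty := by obtain ⟨h, hh⟩ := hne; exact ⟨h, (hmem h).2 hh⟩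
  have hsup : ∀ a ∈ S, ∀ b ∈ S, a ⊔ b ∈ S := fun a ha b hb =>
    (hmem _).2 (homSet_sup_mem ((hmem a).1 ha) ((hmem b).1 hb))
  have hinf : ∀ a ∈ S, ∀ b ∈ S, a ⊓ b ∈ S := fun a ha b hb =>
    (hmem _).2 (homSet_inf_mem ((hmem a).1 ha) ((hmem b).1 hb))
  have key := fkg_finset S hSne hsup hinf F G
    (fun a _ b _ hab => hF a b (fun v _ => hab v))
    (fun a _ b _ hab => hG a b (fun v _ => hab v))
  have hcard : (Nat.card (HomSet D B κ) : ℝ) = (S.card : ℝ) := by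
    rw [Nat.card_coe_set_eq, Set.ncard_eq_toFinset_card _ hfin]
  have hsum : ∀ f : (V → ℤ) → ℝ, ∑ᶠ x ∈ HomSet D B κ, f x = ∑ x ∈ S, f x := by
    intro f
    rw [← hfin.coe_toFinset, finsum_mem_coe_finset]
  have hN : (0 : ℝ) < (S.card : ℝ) := by
    exact_mod_cast Finset.card_pos.2 hSne
  unfold expec
  rw [hcard, hsum F, hsum G, hsum (fun h => F h * G h)]
  rw [div_mul_div_comm, div_le_div_iff₀ (by positivity) hN]
  nlinarith [key, hN.le]


end SquareIce
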